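/- Let A be an n×n irreducible matrix over a field with a cut X ⊆ [n], so that A[X,X̄] = p·qᵀ and A[X̄,X] = u·vᵀ for column vectors p,v of dimension |X| and q,u of dimension |X̄| (with X̄ the complement of X). Let tw(A,X) be the matrix with blocks tw(A,X)[X,X] = A[X,X], tw(A,X)[X,X̄] = p·uᵀ, tw(A,X)[X̄,X] = q·vᵀ, and tw(A,X)[X̄,X̄] = A[X̄,X̄]ᵀ. Then A and tw(A,X) are principal minor equivalent: det(A[S,S]) = det(tw(A,X)[S,S]) for every S ⊆ [n]. -/

import Mathlib

open Matrix Finset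


/-- Principal minor equivalence: all corresponding principal minors agree. -/
def PrincipalMinorEquiv {F : Type*} [Field F] {m : Type*} [Fintype m] [DecidableEq m]
    (A B : Matrix m m F) : Prop :=
  ∀ S : Finset m,
    (A.submatrix (fun i : S => (i : m)) (fun i : S => (i : m))).det =
    (B.submatrix (fun i : S => (i : m)) (fun i : S => (i : m))).det

/-- `X` is a cut of `A`: `2 ≤ |X|`, `|X| ≤ n - 2`, and both off-diagonal blocks
`A[X, X̄]`, `A[X̄, X]` have rank at most one. -/
def IsCut {F : Type*} [Field F] {m : Type*} [Fintype m] [DecidableEq m]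
    (A : Matrix m m F) (X : Finset m) : Prop :=
  2 ≤ X.card ∧ X.card + 2 ≤ Fintype.card m ∧
  (A.submatrix (fun i : X => (i : m)) (fun j : (Xᶜ : Finset m) => (j : m))).rank ≤ 1 ∧
  (A.submatrix (fun i : (Xᶜ : Finset m) => (i : m)) (fun j : X => (j : m))).rank ≤ 1

/-- The cut-transpose of `A` with respect to the cut `X`, given rank-one
factorizations `A[X,X̄] = p·qᵀ` and `A[X̄,X] = u·vᵀ`. -/
def cutTranspose {F : Type*} [Field F] {n : ℕ} (A : Matrix (Fin n) (Fin n) F)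
    (X : Finset (Fin n)) (p v q u : Fin n → F) : Matrix (Fin n) (Fin n) F :=
  fun i j =>
    if i ∈ X then (if j ∈ X then A i j else p i * u j)
    else (if j ∈ X then q i * v j else A j i)

/-- `A` is irreducible: the directed graph with an edge `(i,j)` whenever `i ≠ j`
and `A i j ≠ 0` is strongly connected. -/
def MatrixIrreducible {F : Type*} [Field F] {n : ℕ} (A : Matrix (Fin n) (Fin n) F) : Prop :=
  ∀ i j : Fin n, Relation.ReflTransGen (fun a b => a ≠ b ∧ A a b ≠ 0) i j


section CutTransposeHelpers

variable {F : Type*} [Field F]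

lemma det_eq_zero_of_proportional_rows {ι : Type*} [DecidableEq ι] [Fintype ι]
    (M : Matrix ι ι F) {r₁ r₂ : ι} (hne : r₁ ≠ r₂) (w : ι → F) {c₁ c₂ : F}
    (h₁ : M r₁ = c₁ • w) (h₂ : M r₂ = c₂ • w) : M.det = 0 := by
  have e1 : M = M.updateRow r₁ (c₁ • w) := by rw [← h₁, M.updateRow_eq_self]
  rw [e1, det_updateRow_smul]
  have h₂' : (M.updateRow r₁ w) r₂ = c₂ • w := by
    rw [Matrix.updateRow_ne hne.symm]; exact h₂
  have e2 : M.updateRow r₁ w = (M.updateRow r₁ w).updateRow r₂ (c₂ • w) := by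
    rw [← h₂', Matrix.updateRow_eq_self]
  rw [e2, det_updateRow_smul]
  have hrr : ((M.updateRow r₁ w).updateRow r₂ w) r₁ = ((M.updateRow r₁ w).updateRow r₂ w) r₂ := by
    rw [Matrix.updateRow_self, Matrix.updateRow_ne hne, Matrix.updateRow_self]
  rw [Matrix.det_zero_of_row_eq hne hrr, mul_zero, mul_zero]

lemma sum_finset_card_le_one {γ : Type*} [DecidableEq γ] [Fintype γ]
    (h : Finset γ → F) (hz : ∀ t, 2 ≤ t.card → h t = 0) :
    ∑ t : Finset γ, h t = h ∅ + ∑ x : γ, h {x} := by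
  classical
  have h1 : ∑ t : Finset γ, h t
      = ∑ t ∈ (univ : Finset (Finset γ)).filter (fun t => t.card ≤ 1), h t := by
    refine (Finset.sum_filter_of_ne ?_).symm
    intro t _ ht
    by_contra hc
    exact ht (hz t (by omega))
  have h2 : (univ : Finset (Finset γ)).filter (fun t => t.card ≤ 1)
      = insert ∅ (univ.image fun x : γ => ({x} : Finset γ)) := by
    ext t
    simp only [mem_filter, mem_univ, true_and, mem_insert, mem_image]
    constructor
    · intro ht
      interval_cases h' : t.card
      · left; exact Finset.card_eq_zero.mp h'
      · right
        obtain ⟨x, hx⟩ := Finset.card_eq_one.mp h'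
        exact ⟨x, hx.symm⟩
    · rintro (rfl | ⟨x, rfl⟩) <;> simp
  rw [h1, h2, Finset.sum_insert, Finset.sum_image]
  · intro x _ y _ hxy
    exact Finset.singleton_injective hxy
  · simp only [mem_image, mem_univ, true_and, not_exists]
    exact fun x hx => Finset.singleton_ne_empty x hx

lemma updateRow_comm' {ι κ : Type*} [DecidableEq ι] (M : Matrix ι κ F)
    {i₁ i₂ : ι} (h : i₁ ≠ i₂) (b₁ b₂ : κ → F) :
    (M.updateRow i₁ b₁).updateRow i₂ b₂ = (M.updateRow i₂ b₂).updateRow i₁ b₁ := by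
  ext r c
  by_cases h1 : r = i₁
  · subst h1
    rw [Matrix.updateRow_ne h, Matrix.updateRow_self, Matrix.updateRow_self]
  · by_cases h2 : r = i₂
    · subst h2
      rw [Matrix.updateRow_self, Matrix.updateRow_ne h.symm, Matrix.updateRow_self]
    · rw [Matrix.updateRow_ne h2, Matrix.updateRow_ne h1, Matrix.updateRow_ne h1,
        Matrix.updateRow_ne h2]

variable {α β : Type*} [Fintype α] [Fintype β] [DecidableEq α] [DecidableEq β]

lemma det_fromBlocks_rank_one (B : Matrix α α F) (C : Matrix β β F)
    (p v : α → F) (q u : β → F) :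
    (fromBlocks B (vecMulVec p q) (vecMulVec u v) C).det
      = B.det * C.det
        - (∑ i, p i * (B.updateRow i v).det) * (∑ j, u j * (C.updateRow j q).det) := by
  classical
  set w₁ : α ⊕ β → F := Sum.elim 0 q with hw₁
  set w₂ : α ⊕ β → F := Sum.elim v 0 with hw₂
  set base : Matrix (α ⊕ β) (α ⊕ β) F := fromBlocks B 0 0 C with hbase
  set exM : Matrix (α ⊕ β) (α ⊕ β) F :=
    Matrix.of (Sum.elim (fun i => p i • w₁) (fun j => u j • w₂)) with hexM
  have hM : fromBlocks B (vecMulVec p q) (vecMulVec u v) C = exM + base := by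
    ext r c
    cases r <;> cases c <;>
      simp [hexM, hbase, hw₁, hw₂, Matrix.add_apply, Matrix.vecMulVec_apply, smul_eq_mul]
  -- the expansion over subsets of rows
  have expand : (exM + base).det
      = ∑ s : Finset (α ⊕ β), (Matrix.of (s.piecewise exM base)).det :=
    Matrix.detRowAlternating.toMultilinearMap.map_add_univ exM base
  set T : Finset (α ⊕ β) → F := fun s => (Matrix.of (s.piecewise exM base)).det with hT
  -- row values
  have hrow_mem : ∀ (s : Finset (α ⊕ β)) (r : α ⊕ β), r ∈ s →
      (Matrix.of (s.piecewise exM base)) r = exM r := fun s r hr =>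
    s.piecewise_eq_of_mem _ _ hr
  -- vanishing: two left rows
  have Zleft : ∀ (s : Finset (α ⊕ β)) (a b : α), a ≠ b →
      Sum.inl a ∈ s → Sum.inl b ∈ s → T s = 0 := by
    intro s a b hab ha hb
    refine det_eq_zero_of_proportional_rows _ (r₁ := Sum.inl a) (r₂ := Sum.inl b)
      (by simp [hab]) w₁ (c₁ := p a) (c₂ := p b) ?_ ?_
    · rw [hrow_mem s _ ha]; rfl
    · rw [hrow_mem s _ hb]; rfl
  have Zright : ∀ (s : Finset (α ⊕ β)) (a b : β), a ≠ b →
      Sum.inr a ∈ s → Sum.inr b ∈ s → T s = 0 := by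
    intro s a b hab ha hb
    refine det_eq_zero_of_proportional_rows _ (r₁ := Sum.inr a) (r₂ := Sum.inr b)
      (by simp [hab]) w₂ (c₁ := u a) (c₂ := u b) ?_ ?_
    · rw [hrow_mem s _ ha]; rfl
    · rw [hrow_mem s _ hb]; rfl
  -- values on the four shapes
  have hT00 : T ((∅ : Finset α).disjSum (∅ : Finset β)) = B.det * C.det := by
    have hs : (∅ : Finset α).disjSum (∅ : Finset β) = (∅ : Finset (α ⊕ β)) := by
      ext x; cases x <;> simp
    simp only [hT]
    rw [hs]; erw [Finset.piecewise_empty]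
    exact det_fromBlocks_zero₂₁ B 0 C
  have hT10 : ∀ i : α, T (({i} : Finset α).disjSum (∅ : Finset β)) = 0 := by
    intro i
    have hs : ({i} : Finset α).disjSum (∅ : Finset β) = ({Sum.inl i} : Finset (α ⊕ β)) := by
      ext x; cases x <;> simp
    simp only [hT]
    rw [hs]; erw [Finset.piecewise_singleton]
    have : (Matrix.of (Function.update base (Sum.inl i) (exM (Sum.inl i))))
        = base.updateRow (Sum.inl i) (p i • w₁) := rfl
    rw [this, Matrix.det_updateRow_smul]
    have hrw : base.updateRow (Sum.inl i) w₁
        = fromBlocks (B.updateRow i 0) (Matrix.of fun a b => if a = i then q b else 0) 0 C := by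
      ext r c
      cases r <;> cases c <;>
        simp [Matrix.updateRow_apply, hbase, hw₁, Sum.inl.injEq]
    rw [hrw, det_fromBlocks_zero₂₁,
      Matrix.det_eq_zero_of_row_eq_zero i (by simp), zero_mul, mul_zero]
  have hT01 : ∀ j : β, T ((∅ : Finset α).disjSum ({j} : Finset β)) = 0 := by
    intro j
    have hs : (∅ : Finset α).disjSum ({j} : Finset β) = ({Sum.inr j} : Finset (α ⊕ β)) := by
      ext x; cases x <;> simp
    simp only [hT]
    rw [hs]; erw [Finset.piecewise_singleton]
    have : (Matrix.of (Function.update base (Sum.inr j) (exM (Sum.inr j))))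
        = base.updateRow (Sum.inr j) (u j • w₂) := rfl
    rw [this, Matrix.det_updateRow_smul]
    have hrw : base.updateRow (Sum.inr j) w₂
        = fromBlocks B 0 (Matrix.of fun a b => if a = j then v b else 0) (C.updateRow j 0) := by
      ext r c
      cases r <;> cases c <;>
        simp [Matrix.updateRow_apply, hbase, hw₂, Sum.inr.injEq]
    rw [hrw, det_fromBlocks_zero₁₂,
      Matrix.det_eq_zero_of_row_eq_zero j (by simp), mul_zero, mul_zero]
  have hT11 : ∀ (i : α) (j : β), T (({i} : Finset α).disjSum ({j} : Finset β))
      = -(p i * (B.updateRow i v).det * (u j * (C.updateRow j q).det)) := by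
    intro i j
    have hs : ({i} : Finset α).disjSum ({j} : Finset β)
        = insert (Sum.inl i) ({Sum.inr j} : Finset (α ⊕ β)) := by
      ext x; cases x <;> simp
    simp only [hT]
    rw [hs]; erw [Finset.piecewise_insert, Finset.piecewise_singleton]
    have hne : (Sum.inl i : α ⊕ β) ≠ Sum.inr j := by simp
    have hmat : (Matrix.of (Function.update (Function.update base (Sum.inr j) (exM (Sum.inr j)))
          (Sum.inl i) (exM (Sum.inl i))))
        = (base.updateRow (Sum.inr j) (u j • w₂)).updateRow (Sum.inl i) (p i • w₁) := rfl
    rw [hmat, Matrix.det_updateRow_smul, updateRow_comm' _ hne.symm,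
      Matrix.det_updateRow_smul, updateRow_comm' _ hne]
    set E : Matrix (α ⊕ β) (α ⊕ β) F :=
      (base.updateRow (Sum.inr j) w₂).updateRow (Sum.inl i) w₁ with hE
    have hji : (Sum.inr j : α ⊕ β) ≠ Sum.inl i := by simp
    have hE1 : E (Sum.inl i) = w₁ := Matrix.updateRow_self
    have hE2 : E (Sum.inr j) = w₂ := by
      rw [hE, Matrix.updateRow_ne hji, Matrix.updateRow_self]
    have hE3 : ∀ a : α, a ≠ i → E (Sum.inl a) = base (Sum.inl a) := fun a ha => by
      rw [hE, Matrix.updateRow_ne (by simpa using ha), Matrix.updateRow_ne (by simp)]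
    have hE4 : ∀ b : β, b ≠ j → E (Sum.inr b) = base (Sum.inr b) := fun b hb => by
      rw [hE, Matrix.updateRow_ne (by simp), Matrix.updateRow_ne (by simpa using hb)]
    have hswap : E.submatrix (Equiv.swap (Sum.inl i) (Sum.inr j)) id
        = fromBlocks (B.updateRow i v) 0 0 (C.updateRow j q) := by
      ext r c
      rcases r with a | b
      · by_cases ha : a = i
        · subst ha
          have hσ : Equiv.swap (Sum.inl a : α ⊕ β) (Sum.inr j) (Sum.inl a) = Sum.inr j :=
            Equiv.swap_apply_left _ _
          rcases c with a' | b' <;>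
            simp [Matrix.submatrix_apply, hσ, hE2, hw₂, Matrix.updateRow_self]
        · have hσ : Equiv.swap (Sum.inl i : α ⊕ β) (Sum.inr j) (Sum.inl a) = Sum.inl a :=
            Equiv.swap_apply_of_ne_of_ne (by simpa using ha) (by simp)
          rcases c with a' | b' <;>
            simp [Matrix.submatrix_apply, hσ, hE3 a ha, hbase, Matrix.updateRow_ne ha]
      · by_cases hb : b = j
        · subst hb
          have hσ : Equiv.swap (Sum.inl i : α ⊕ β) (Sum.inr b) (Sum.inr b) = Sum.inl i :=
            Equiv.swap_apply_right _ _
          rcases c with a' | b' <;>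
            simp [Matrix.submatrix_apply, hσ, hE1, hw₁, Matrix.updateRow_self]
        · have hσ : Equiv.swap (Sum.inl i : α ⊕ β) (Sum.inr j) (Sum.inr b) = Sum.inr b :=
            Equiv.swap_apply_of_ne_of_ne (by simp) (by simpa using hb)
          rcases c with a' | b' <;>
            simp [Matrix.submatrix_apply, hσ, hE4 b hb, hbase, Matrix.updateRow_ne hb]
    have hperm := Matrix.det_permute (Equiv.swap (Sum.inl i : α ⊕ β) (Sum.inr j)) E
    rw [hswap, Equiv.Perm.sign_swap (by simp), det_fromBlocks_zero₂₁] at hperm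
    have hEdet : E.det = -((B.updateRow i v).det * (C.updateRow j q).det) := by
      have : (B.updateRow i v).det * (C.updateRow j q).det = -E.det := by
        simpa using hperm
      rw [this]; ring
    rw [hEdet]
    ring
  -- vanishing for large shapes
  have hz1 : ∀ s₁ : Finset α, 2 ≤ s₁.card → ∀ s₂ : Finset β, T (s₁.disjSum s₂) = 0 := by
    intro s₁ h2 s₂
    obtain ⟨a, ha, b, hb, hab⟩ := Finset.one_lt_card.mp (show 1 < s₁.card by omega)
    exact Zleft _ a b hab (Finset.inl_mem_disjSum.mpr ha) (Finset.inl_mem_disjSum.mpr hb)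
  have hz2 : ∀ (s₁ : Finset α) (s₂ : Finset β), 2 ≤ s₂.card → T (s₁.disjSum s₂) = 0 := by
    intro s₁ s₂ h2
    obtain ⟨a, ha, b, hb, hab⟩ := Finset.one_lt_card.mp (show 1 < s₂.card by omega)
    exact Zright _ a b hab (Finset.inr_mem_disjSum.mpr ha) (Finset.inr_mem_disjSum.mpr hb)
  -- reindex the sum over all subsets by pairs of subsets
  have hbij : Function.Bijective (fun pr : Finset α × Finset β => pr.1.disjSum pr.2) := by
    constructor
    · intro a b h
      have h1 := congrArg Finset.toLeft h
      have h2 := congrArg Finset.toRight h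
      simp only [Finset.toLeft_disjSum, Finset.toRight_disjSum] at h1 h2
      exact Prod.ext h1 h2
    · exact fun s => ⟨(s.toLeft, s.toRight), Finset.toLeft_disjSum_toRight⟩
  have hsum : ∑ s : Finset (α ⊕ β), T s = ∑ pr : Finset α × Finset β, T (pr.1.disjSum pr.2) :=
    (Fintype.sum_bijective _ hbij (fun pr => T (pr.1.disjSum pr.2)) T (fun pr => rfl)).symm
  have inner0 : ∑ s₂ : Finset β, T ((∅ : Finset α).disjSum s₂) = B.det * C.det := by
    rw [sum_finset_card_le_one _ (fun t ht => hz2 _ t ht)]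
    simp only [hT00, hT01]
    simp
  have innerSing : ∀ i : α, ∑ s₂ : Finset β, T (({i} : Finset α).disjSum s₂)
      = -(p i * (B.updateRow i v).det * ∑ j, u j * (C.updateRow j q).det) := by
    intro i
    rw [sum_finset_card_le_one _ (fun t ht => hz2 _ t ht)]
    simp only [hT10, hT11, zero_add]
    rw [Finset.sum_neg_distrib]
    congr 1
    rw [Finset.mul_sum]
  rw [hM, expand, hsum, Fintype.sum_prod_type]
  rw [sum_finset_card_le_one _ (fun t ht => Finset.sum_eq_zero fun s₂ _ => hz1 t ht s₂)]
  simp only [inner0, innerSing]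
  rw [Finset.sum_neg_distrib, ← Finset.sum_mul]
  ring

lemma bridge_sum {β : Type*} [Fintype β] [DecidableEq β] (C : Matrix β β F) (q u : β → F) :
    ∑ j, u j * (C.updateRow j q).det = ∑ j, q j * ((Cᵀ).updateRow j u).det := by
  have h1 : ∀ j, (C.updateRow j q).det = ((C.adjugate)ᵀ *ᵥ q) j := by
    intro j
    rw [← Matrix.cramer_transpose_apply, Matrix.cramer_eq_adjugate_mulVec,
      ← Matrix.adjugate_transpose]
  have h2 : ∀ j, ((Cᵀ).updateRow j u).det = (C.adjugate *ᵥ u) j := by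
    intro j
    rw [← Matrix.cramer_transpose_apply, Matrix.transpose_transpose,
      Matrix.cramer_eq_adjugate_mulVec]
  simp only [h1, h2, Matrix.mulVec, dotProduct, Matrix.transpose_apply, Finset.mul_sum]
  rw [Finset.sum_comm]
  exact Finset.sum_congr rfl fun k _ => Finset.sum_congr rfl fun j _ => by ring

end CutTransposeHelpers

lemma main_det_eq {F : Type*} [Field F] {α β : Type*} [Fintype α] [Fintype β]
    [DecidableEq α] [DecidableEq β] (B : Matrix α α F) (C : Matrix β β F)
    (p v : α → F) (q u : β → F) :
    (fromBlocks B (vecMulVec p q) (vecMulVec u v) C).det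
      = (fromBlocks B (vecMulVec p u) (vecMulVec q v) Cᵀ).det := by
  rw [det_fromBlocks_rank_one, det_fromBlocks_rank_one, Matrix.det_transpose,
    bridge_sum C q u]

theorem cutTranspose_pme {n : ℕ} {F : Type*} [Field F]
    (A : Matrix (Fin n) (Fin n) F) (hirr : MatrixIrreducible A)
    (X : Finset (Fin n)) (hX : IsCut A X) (p v q u : Fin n → F)
    (hpq : ∀ i ∈ X, ∀ j ∉ X, A i j = p i * q j)
    (huv : ∀ i ∉ X, ∀ j ∈ X, A i j = u i * v j) :
    PrincipalMinorEquiv A (cutTranspose A X p v q u) := by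
  intro S
  classical
  set c : {x // x ∈ S} → Fin n := fun i => (i : Fin n) with hc
  set P : {x // x ∈ S} → Prop := fun i => (i : Fin n) ∈ X with hP
  set e : {i : {x // x ∈ S} // P i} ⊕ {i : {x // x ∈ S} // ¬ P i} ≃ {x // x ∈ S} :=
    Equiv.sumCompl P with he
  rw [← Matrix.det_submatrix_equiv_self e (A.submatrix c c),
    ← Matrix.det_submatrix_equiv_self e ((cutTranspose A X p v q u).submatrix c c)]
  set B' : Matrix {i : {x // x ∈ S} // P i} {i : {x // x ∈ S} // P i} F :=
    Matrix.of (fun i j => A i.1.1 j.1.1) with hB'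
  set C' : Matrix {i : {x // x ∈ S} // ¬ P i} {i : {x // x ∈ S} // ¬ P i} F :=
    Matrix.of (fun i j => A i.1.1 j.1.1) with hC'
  set p' : {i : {x // x ∈ S} // P i} → F := fun i => p i.1.1 with hp'
  set v' : {i : {x // x ∈ S} // P i} → F := fun i => v i.1.1 with hv'
  set q' : {i : {x // x ∈ S} // ¬ P i} → F := fun j => q j.1.1 with hq'
  set u' : {i : {x // x ∈ S} // ¬ P i} → F := fun j => u j.1.1 with hu'
  have hA : (A.submatrix c c).submatrix e e
      = fromBlocks B' (vecMulVec p' q') (vecMulVec u' v') C' := by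
    ext r s
    rcases r with i | i <;> rcases s with j | j
    · simp [Matrix.submatrix_apply, he, hc, hB']
    · simp only [Matrix.submatrix_apply, he, Equiv.sumCompl_apply_inl,
        Equiv.sumCompl_apply_inr, Matrix.fromBlocks_apply₁₂, hc,
        Matrix.vecMulVec_apply, hp', hq']
      exact hpq _ i.2 _ j.2
    · simp only [Matrix.submatrix_apply, he, Equiv.sumCompl_apply_inl,
        Equiv.sumCompl_apply_inr, Matrix.fromBlocks_apply₂₁, hc,
        Matrix.vecMulVec_apply, hu', hv']
      exact huv _ i.2 _ j.2
    · simp [Matrix.submatrix_apply, he, hc, hC']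
  have hB : ((cutTranspose A X p v q u).submatrix c c).submatrix e e
      = fromBlocks B' (vecMulVec p' u') (vecMulVec q' v') C'ᵀ := by
    ext r s
    rcases r with i | i <;> rcases s with j | j
    · have hi : (i.1.1 : Fin n) ∈ X := i.2
      have hj : (j.1.1 : Fin n) ∈ X := j.2
      simp [Matrix.submatrix_apply, he, hc, hB', cutTranspose, hi, hj]
    · have hi : (i.1.1 : Fin n) ∈ X := i.2
      have hj : ¬ (j.1.1 : Fin n) ∈ X := j.2
      simp [Matrix.submatrix_apply, he, hc, hp', hu', Matrix.vecMulVec_apply, cutTranspose, hi, hj]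
    · have hi : ¬ (i.1.1 : Fin n) ∈ X := i.2
      have hj : (j.1.1 : Fin n) ∈ X := j.2
      simp [Matrix.submatrix_apply, he, hc, hq', hv', Matrix.vecMulVec_apply, cutTranspose, hi, hj]
    · have hi : ¬ (i.1.1 : Fin n) ∈ X := i.2
      have hj : ¬ (j.1.1 : Fin n) ∈ X := j.2
      simp [Matrix.submatrix_apply, he, hc, hC', cutTranspose, hi, hj]
  rw [hA, hB]
  exact main_det_eq B' C' p' v' q' u'
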